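/- L^∞-stability of the θ-limited TVD-AP scheme: let β = 1 − √2/2, α ∈ [0,1], θ = α β/(1 − β) = α(√2 − 1), let σ_e ≥ 0 and σ_i ≥ 0 satisfy the CFL conditions (1 − α) σ_e ≤ 1 − α and α σ_e ≤ α √2, and suppose w^n, w^⋆, w^{n+1} : Fin L → ℝ satisfy, for all j (indices cyclic mod L), w^⋆_j = w_j^n − β σ_e (w_j^n − w_{j−1}^n) − β σ_i (w^⋆_j − w^⋆_{j−1}) and w_j^{n+1} = w_j^n − θ(β−1) σ_e (w_j^n − w_{j−1}^n) − θ(1−β) σ_i (w^⋆_j − w^⋆_{j−1}) − θ(2−β) σ_e (w^⋆_j − w^⋆_{j−1}) − θβ σ_i (w_j^{n+1} − w_{j−1}^{n+1}) − (1−θ) σ_e (w_j^n − w_{j−1}^n) − (1−θ) σ_i (w_j^{n+1} − w_{j−1}^{n+1}). Then max_j |w^⋆_j| ≤ max_j |w_j^n| and max_j |w_j^{n+1}| ≤ max_j |w_j^n|. -/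

import Mathlib

/-- Generic maximum-principle step: if `(1+d)|x| ≤ d|y| + M` with `d ≥ 0` and
`|y| ≤ |x|`, then `|x| ≤ M`. -/
lemma step_bound {d M x y : ℝ} (hd : 0 ≤ d)
    (h : (1 + d) * |x| ≤ d * |y| + M) (hyx : |y| ≤ |x|) : |x| ≤ M := by
  nlinarith [abs_nonneg x]

lemma mul_abs_le {c M x : ℝ} (hc : 0 ≤ c) (hx : |x| ≤ M) : |c * x| ≤ c * M := by
  rw [abs_mul, abs_of_nonneg hc]
  exact mul_le_mul_of_nonneg_left hx hc

set_option maxHeartbeats 1000000 in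
/-- L^∞-stability of the θ-limited TVD-AP scheme with periodic boundary
conditions, under the uniform CFL conditions `(1 - α) σe ≤ 1 - α` and
`α σe ≤ α √2`, with `θ = α β / (1 - β) = α (√2 - 1)`. -/
theorem theta_scheme_Linf_stable (L : ℕ) [NeZero L] (σe σi : ℝ)
    (β α θ : ℝ) (hβ : β = 1 - Real.sqrt 2 / 2)
    (hα0 : 0 ≤ α) (hα1 : α ≤ 1) (hθ : θ = α * β / (1 - β))
    (hσe : 0 ≤ σe) (hσi : 0 ≤ σi)
    (hCFL1 : (1 - α) * σe ≤ 1 - α) (hCFL2 : α * σe ≤ α * Real.sqrt 2)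
    (wn ws wn1 : Fin L → ℝ)
    (hstage1 : ∀ j : Fin L,
      ws j = wn j - β * σe * (wn j - wn (j - 1))
                  - β * σi * (ws j - ws (j - 1)))
    (hstage2 : ∀ j : Fin L,
      wn1 j = wn j
        - θ * (β - 1) * σe * (wn j - wn (j - 1))
        - θ * (1 - β) * σi * (ws j - ws (j - 1))
        - θ * (2 - β) * σe * (ws j - ws (j - 1))
        - θ * β * σi * (wn1 j - wn1 (j - 1))
        - (1 - θ) * σe * (wn j - wn (j - 1))
        - (1 - θ) * σi * (wn1 j - wn1 (j - 1))) :
    ((⨆ j : Fin L, |ws j|) ≤ ⨆ j : Fin L, |wn j|) ∧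
    ((⨆ j : Fin L, |wn1 j|) ≤ ⨆ j : Fin L, |wn j|) := by
  haveI : Nonempty (Fin L) := Fin.pos_iff_nonempty.mp (Nat.pos_of_ne_zero (NeZero.ne L))
  set s : ℝ := Real.sqrt 2 with hs
  have hs2 : s ^ 2 = 2 := Real.sq_sqrt (by norm_num)
  have hs1 : 1 < s := by nlinarith [Real.sqrt_nonneg 2]
  have hslt2 : s < 2 := by nlinarith [Real.sqrt_nonneg 2]
  -- θ in terms of s
  have hβs : β = 1 - s / 2 := hβ
  have hθs : θ = α * (s - 1) := by
    have hne : (1 : ℝ) - β ≠ 0 := by rw [hβs]; intro h; nlinarith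
    have h1 : θ * (1 - β) = α * β := by rw [hθ]; field_simp
    rw [hβs] at h1
    have hsne : s ≠ 0 := by positivity
    field_simp at h1 ⊢
    nlinarith [h1]
  subst hβs hθs
  -- σe ≤ s
  have hσes : σe ≤ s := by
    rcases eq_or_lt_of_le hα1 with h | h
    · have h2 := hCFL2; rw [h] at h2; simpa using h2
    · have h2 : (0:ℝ) < 1 - α := by linarith
      nlinarith
  have hMn : ∀ i : Fin L, |wn i| ≤ ⨆ j : Fin L, |wn j| :=
    fun i => le_ciSup (f := fun j : Fin L => |wn j|)
      (Set.Finite.bddAbove (Set.finite_range _)) i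
  -- basic positivity facts
  have hβ0 : (0:ℝ) ≤ 1 - s / 2 := by linarith
  have h1a : (0:ℝ) ≤ (1 - s / 2) * σi := by positivity
  have h1b : (0:ℝ) ≤ 1 - (1 - s / 2) * σe := by nlinarith
  have h1c : (0:ℝ) ≤ (1 - s / 2) * σe := by positivity
  have hd1 : (0:ℝ) ≤ 1 + (1 - s / 2) * σi := by linarith
  -- Part 1
  obtain ⟨j, hj⟩ := Finite.exists_max fun j : Fin L => |ws j|
  have e1 : (1 + (1 - s / 2) * σi) * ws j
      = (1 - s / 2) * σi * ws (j - 1) + (1 - (1 - s / 2) * σe) * wn j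
        + (1 - s / 2) * σe * wn (j - 1) := by
    linear_combination hstage1 j
  have key1 : |ws j| ≤ ⨆ k : Fin L, |wn k| := by
    apply step_bound (d := (1 - s / 2) * σi) (y := ws (j - 1)) h1a _ (hj _)
    calc (1 + (1 - s / 2) * σi) * |ws j| = |(1 + (1 - s / 2) * σi) * ws j| := by
          rw [abs_mul, abs_of_nonneg hd1]
      _ = |(1 - s / 2) * σi * ws (j - 1) + (1 - (1 - s / 2) * σe) * wn j
            + (1 - s / 2) * σe * wn (j - 1)| := by rw [e1]
      _ ≤ |(1 - s / 2) * σi * ws (j - 1)| + |(1 - (1 - s / 2) * σe) * wn j|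
            + |(1 - s / 2) * σe * wn (j - 1)| := abs_add_three _ _ _
      _ ≤ (1 - s / 2) * σi * |ws (j - 1)| + (1 - (1 - s / 2) * σe) * (⨆ k, |wn k|)
            + (1 - s / 2) * σe * (⨆ k, |wn k|) :=
          add_le_add (add_le_add (mul_abs_le h1a le_rfl) (mul_abs_le h1b (hMn _)))
            (mul_abs_le h1c (hMn _))
      _ = (1 - s / 2) * σi * |ws (j - 1)| + (⨆ k, |wn k|) := by ring
  have part1 : (⨆ j : Fin L, |ws j|) ≤ ⨆ j : Fin L, |wn j| :=
    ciSup_le fun i => (hj i).trans key1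
  have hMs : ∀ i : Fin L, |ws i| ≤ ⨆ j : Fin L, |wn j| :=
    fun i => le_trans (le_ciSup (f := fun j : Fin L => |ws j|)
      (Set.Finite.bddAbove (Set.finite_range _)) i) part1
  -- Part 2
  obtain ⟨k, hk⟩ := Finite.exists_max fun j : Fin L => |wn1 j|
  have hab : α * (1 - s / 2) ≤ 1 :=
    le_trans (mul_le_of_le_one_right hα0 (by linarith)) hα1
  have h2a : (0:ℝ) ≤ (1 - α * (1 - s / 2)) * σi :=
    mul_nonneg (by linarith) hσi
  have h2b : (0:ℝ) ≤ (1 - α) * (1 - σe) := by nlinarith [hCFL1]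
  have h2c : (0:ℝ) ≤ (1 - α) * σe := mul_nonneg (by linarith) hσe
  have h2d : (0:ℝ) ≤ α - α * s / 2 * σe := by
    have h := mul_le_mul_of_nonneg_left hCFL2 (by positivity : (0:ℝ) ≤ s / 2)
    nlinarith [h, hs2]
  have h2e : (0:ℝ) ≤ α * s / 2 * σe := by positivity
  have hd2 : (0:ℝ) ≤ 1 + (1 - α * (1 - s / 2)) * σi := by linarith [h2a]
  have e2 : (1 + (1 - α * (1 - s / 2)) * σi) * wn1 k
      = (1 - α * (1 - s / 2)) * σi * wn1 (k - 1)
        + (1 - α) * (1 - σe) * wn k + (1 - α) * σe * wn (k - 1)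
        + (α - α * s / 2 * σe) * ws k + α * s / 2 * σe * ws (k - 1) := by
    linear_combination hstage2 k - α * hstage1 k
      + (α / 2 * σe * (wn k - wn (k - 1)) - α / 2 * σe * (ws k - ws (k - 1))
         + α / 2 * σi * (wn1 k - wn1 (k - 1))
         - α / 2 * σi * (ws k - ws (k - 1))) * hs2
  have key2 : |wn1 k| ≤ ⨆ j : Fin L, |wn j| := by
    apply step_bound (d := (1 - α * (1 - s / 2)) * σi) (y := wn1 (k - 1)) h2a _ (hk _)
    calc (1 + (1 - α * (1 - s / 2)) * σi) * |wn1 k|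
        = |(1 + (1 - α * (1 - s / 2)) * σi) * wn1 k| := by
          rw [abs_mul, abs_of_nonneg hd2]
      _ = |(1 - α * (1 - s / 2)) * σi * wn1 (k - 1)
            + (1 - α) * (1 - σe) * wn k + (1 - α) * σe * wn (k - 1)
            + (α - α * s / 2 * σe) * ws k + α * s / 2 * σe * ws (k - 1)| := by rw [e2]
      _ ≤ |(1 - α * (1 - s / 2)) * σi * wn1 (k - 1)
            + (1 - α) * (1 - σe) * wn k + (1 - α) * σe * wn (k - 1)
            + (α - α * s / 2 * σe) * ws k| + |α * s / 2 * σe * ws (k - 1)| :=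
          abs_add_le _ _
      _ ≤ (|(1 - α * (1 - s / 2)) * σi * wn1 (k - 1)|
            + |(1 - α) * (1 - σe) * wn k| + |(1 - α) * σe * wn (k - 1)|
            + |(α - α * s / 2 * σe) * ws k|) + |α * s / 2 * σe * ws (k - 1)| :=
          add_le_add_left (le_trans (abs_add_le _ _)
            (add_le_add_left (abs_add_three _ _ _) _)) _
      _ ≤ ((1 - α * (1 - s / 2)) * σi * |wn1 (k - 1)|
            + (1 - α) * (1 - σe) * (⨆ i, |wn i|) + (1 - α) * σe * (⨆ i, |wn i|)
            + (α - α * s / 2 * σe) * (⨆ i, |wn i|))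
            + α * s / 2 * σe * (⨆ i, |wn i|) :=
          add_le_add (add_le_add (add_le_add (add_le_add (mul_abs_le h2a le_rfl)
            (mul_abs_le h2b (hMn _))) (mul_abs_le h2c (hMn _)))
            (mul_abs_le h2d (hMs _))) (mul_abs_le h2e (hMs _))
      _ = (1 - α * (1 - s / 2)) * σi * |wn1 (k - 1)| + (⨆ i, |wn i|) := by ring
  exact ⟨part1, ciSup_le fun i => (hk i).trans key2⟩
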